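/- Let z ∈ ℂ^ν with Im z ≠ 0 and define g : ℝ^ν → ℝ by g(t) = |t − z|^{−2}. For every multi-index α, ∂^α g(t) = Σ_{2β ≤ α} α! · T_α^β(t,z) · |t − z|^{−2}, where T_α^β(t,z) = ((−2)^{|α−β|} |α−β|!)/(2^{|β|} β! (α−2β)!) · (t − Re z)^{α−2β} · |t − z|^{−2|α−β|}. -/

import Mathlib

/-- `|t - z|² = Σ_j ((t_j - Re z_j)² + (Im z_j)²)`. -/
noncomputable def absSq {ν : ℕ} (z : Fin ν → ℂ) (t : Fin ν → ℝ) : ℝ :=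
  ∑ j, ((t j - (z j).re) ^ 2 + (z j).im ^ 2)

/-- Partial derivative in the `i`-th coordinate direction. -/
noncomputable def pderiv' {ν : ℕ} {E : Type*} [NormedAddCommGroup E] [NormedSpace ℝ E]
    (i : Fin ν) (f : (Fin ν → ℝ) → E) : (Fin ν → ℝ) → E :=
  fun t => fderiv ℝ f t (Pi.single i 1)

/-- Multi-index partial derivative `∂^α` (coordinates applied in a fixed order). -/
noncomputable def mderiv {ν : ℕ} {E : Type*} [NormedAddCommGroup E] [NormedSpace ℝ E]
    (α : Fin ν → ℕ) (f : (Fin ν → ℝ) → E) : (Fin ν → ℝ) → E :=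
  (List.finRange ν).foldr (fun i g => (pderiv' i)^[α i] g) f

/-- `T_α^β(t,z) = ((−2)^{|α−β|}|α−β|!)/(2^{|β|} β! (α−2β)!) (t−Re z)^{α−2β} |t−z|^{−2|α−β|}`. -/
noncomputable def Tcoef {ν : ℕ} (z : Fin ν → ℂ) (α β : Fin ν → ℕ) (t : Fin ν → ℝ) : ℝ :=
  ((-2 : ℝ) ^ (∑ j, (α j - β j)) * (Nat.factorial (∑ j, (α j - β j))) /
      ((2 : ℝ) ^ (∑ j, β j) * (∏ j, (Nat.factorial (β j) : ℝ)) *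
        ∏ j, (Nat.factorial (α j - 2 * β j) : ℝ))) *
    (∏ j, (t j - (z j).re) ^ (α j - 2 * β j)) *
    (absSq z t) ^ (-(∑ j, (α j - β j) : ℤ))

namespace Stmt1Aux

open Finset

variable {ν : ℕ}

def Sset (α : Fin ν → ℕ) : Finset (Fin ν → ℕ) :=
  (Fintype.piFinset fun j => Finset.range (α j + 1)).filter (fun β => ∀ j, 2 * β j ≤ α j)

lemma mem_Sset {α β : Fin ν → ℕ} : β ∈ Sset α ↔ ∀ j, 2 * β j ≤ α j := by
  simp only [Sset, mem_filter, Fintype.mem_piFinset, Finset.mem_range]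
  constructor
  · exact fun h => h.2
  · intro h
    exact ⟨fun j => Nat.lt_succ_of_le (le_trans (Nat.le_mul_of_pos_left _ two_pos) (h j)), h⟩

noncomputable def Cc (α β : Fin ν → ℕ) : ℝ :=
  (∏ j, (Nat.factorial (α j) : ℝ)) * (-2 : ℝ) ^ (∑ j, (α j - β j)) *
      (Nat.factorial (∑ j, (α j - β j)) : ℝ) /
    ((2 : ℝ) ^ (∑ j, β j) * (∏ j, (Nat.factorial (β j) : ℝ)) *
      ∏ j, (Nat.factorial (α j - 2 * β j) : ℝ))

def mI (α β : Fin ν → ℕ) : ℤ := -(∑ j, (α j - β j) : ℤ) - 1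

noncomputable def FF (z : Fin ν → ℂ) (α : Fin ν → ℕ) : (Fin ν → ℝ) → ℝ := fun t =>
  ∑ β ∈ Sset α, Cc α β * (∏ j, (t j - (z j).re) ^ (α j - 2 * β j)) * absSq z t ^ mI α β

lemma absSq_pos {z : Fin ν → ℂ} (hz : (fun j => (z j).im) ≠ 0) (t : Fin ν → ℝ) :
    0 < absSq z t := by
  obtain ⟨j0, hj0⟩ := Function.ne_iff.mp hz
  have h0 : (z j0).im ≠ 0 := hj0
  have h1 : (0:ℝ) < (t j0 - (z j0).re) ^ 2 + (z j0).im ^ 2 := by positivity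
  exact Finset.sum_pos' (fun j _ => by positivity) ⟨j0, Finset.mem_univ j0, h1⟩

open ContinuousLinearMap

noncomputable def LQ (z : Fin ν → ℂ) (t : Fin ν → ℝ) : (Fin ν → ℝ) →L[ℝ] ℝ :=
  ∑ j, (2 * (t j - (z j).re)) • ContinuousLinearMap.proj j

lemma hasFDerivAt_absSq (z : Fin ν → ℂ) (t : Fin ν → ℝ) :
    HasFDerivAt (fun s => ∑ j, ((s j - (z j).re) ^ 2 + (z j).im ^ 2)) (LQ z t) t := by
  have h : ∀ j : Fin ν, HasFDerivAt (fun s : Fin ν → ℝ => (s j - (z j).re) ^ 2 + (z j).im ^ 2)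
      ((2 * (t j - (z j).re)) • (ContinuousLinearMap.proj j : (Fin ν → ℝ) →L[ℝ] ℝ)) t := by
    intro j
    have h1 : HasFDerivAt (fun s : Fin ν → ℝ => s j - (z j).re)
        (ContinuousLinearMap.proj j : (Fin ν → ℝ) →L[ℝ] ℝ) t := by
      simpa using (hasFDerivAt_apply (𝕜 := ℝ) j t).sub_const ((z j).re)
    have h2 := (hasDerivAt_pow 2 (t j - (z j).re)).comp_hasFDerivAt t h1
    simpa using h2.add_const ((z j).im ^ 2)
  exact HasFDerivAt.fun_sum (fun j _ => h j)

lemma LQ_apply (z : Fin ν → ℂ) (t : Fin ν → ℝ) (i : Fin ν) :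
    LQ z t (Pi.single i 1) = 2 * (t i - (z i).re) := by
  simp [LQ, ContinuousLinearMap.sum_apply, Pi.single_apply]

noncomputable def LP (z : Fin ν → ℂ) (γ : Fin ν → ℕ) (t : Fin ν → ℝ) : (Fin ν → ℝ) →L[ℝ] ℝ :=
  ∑ j, (∏ k ∈ univ.erase j, (t k - (z k).re) ^ γ k) •
    (((γ j : ℝ) * (t j - (z j).re) ^ (γ j - 1)) • ContinuousLinearMap.proj j)

lemma hasFDerivAt_P (z : Fin ν → ℂ) (γ : Fin ν → ℕ) (t : Fin ν → ℝ) :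
    HasFDerivAt (fun s => ∏ j, (s j - (z j).re) ^ γ j) (LP z γ t) t := by
  exact HasFDerivAt.finset_prod (fun j _ =>
    (hasDerivAt_pow (γ j) (t j - (z j).re)).comp_hasFDerivAt t
      (by simpa using (hasFDerivAt_apply (𝕜 := ℝ) j t).sub_const ((z j).re) :
        HasFDerivAt (fun s : Fin ν → ℝ => s j - (z j).re) (ContinuousLinearMap.proj j) t))

lemma LP_apply (z : Fin ν → ℂ) (γ : Fin ν → ℕ) (t : Fin ν → ℝ) (i : Fin ν) :
    LP z γ t (Pi.single i 1) =
      (∏ k ∈ univ.erase i, (t k - (z k).re) ^ γ k) *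
        ((γ i : ℝ) * (t i - (z i).re) ^ (γ i - 1)) := by
  simp [LP, ContinuousLinearMap.sum_apply, Pi.single_apply, mul_ite]

lemma hasFDerivAt_term (z : Fin ν → ℂ) (γ : Fin ν → ℕ) (m : ℤ) (t : Fin ν → ℝ)
    (hQ : absSq z t ≠ 0) :
    HasFDerivAt (fun s => (∏ j, (s j - (z j).re) ^ γ j) * absSq z s ^ m)
      ((∏ j, (t j - (z j).re) ^ γ j) • (((m : ℝ) * absSq z t ^ (m - 1)) • LQ z t) +
        (absSq z t ^ m) • LP z γ t) t := by
  have hQ' : HasFDerivAt (absSq z) (LQ z t) t := hasFDerivAt_absSq z t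
  have hZ : HasFDerivAt (fun s => absSq z s ^ m)
      (((m : ℝ) * absSq z t ^ (m - 1)) • LQ z t) t :=
    (hasDerivAt_zpow m (absSq z t) (Or.inl hQ)).comp_hasFDerivAt t hQ'
  exact (hasFDerivAt_P z γ t).mul hZ

lemma pderiv_FF (z : Fin ν → ℂ) (hz : (fun j => (z j).im) ≠ 0) (α : Fin ν → ℕ) (i : Fin ν)
    (t : Fin ν → ℝ) :
    pderiv' i (FF z α) t =
      ∑ β ∈ Sset α, Cc α β *
        ((∏ j, (t j - (z j).re) ^ (α j - 2 * β j)) *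
            (((mI α β : ℤ) : ℝ) * absSq z t ^ (mI α β - 1) * (2 * (t i - (z i).re)))
          + absSq z t ^ mI α β *
            ((∏ k ∈ Finset.univ.erase i, (t k - (z k).re) ^ (α k - 2 * β k)) *
              (((α i - 2 * β i : ℕ) : ℝ) * (t i - (z i).re) ^ ((α i - 2 * β i) - 1)))) := by
  have hQ : absSq z t ≠ 0 := (absSq_pos hz t).ne'
  have hF : HasFDerivAt (FF z α)
      (∑ β ∈ Sset α, Cc α β •
        ((∏ j, (t j - (z j).re) ^ (α j - 2 * β j)) •
            (((mI α β : ℤ) : ℝ) * absSq z t ^ (mI α β - 1)) • LQ z t +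
          (absSq z t ^ mI α β) • LP z (fun j => α j - 2 * β j) t)) t := by
    unfold FF
    simp only [mul_assoc]
    exact HasFDerivAt.fun_sum (fun β _ =>
      (hasFDerivAt_term z (fun j => α j - 2 * β j) (mI α β) t hQ).const_mul (Cc α β))
  rw [pderiv', hF.fderiv]
  simp only [ContinuousLinearMap.sum_apply, ContinuousLinearMap.smul_apply,
    ContinuousLinearMap.add_apply, LQ_apply, LP_apply, smul_eq_mul]

lemma prod_fact_split (f : Fin ν → ℕ) (i : Fin ν) :
    (∏ j, ((f j).factorial : ℝ)) = ((f i).factorial : ℝ) *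
      ∏ j ∈ Finset.univ.erase i, ((f j).factorial : ℝ) :=
  (Finset.mul_prod_erase Finset.univ _ (Finset.mem_univ i)).symm

lemma sum_split (f : Fin ν → ℕ) (i : Fin ν) :
    ∑ j, f j = f i + ∑ j ∈ Finset.univ.erase i, f j :=
  (Finset.add_sum_erase Finset.univ f (Finset.mem_univ i)).symm

lemma prod_pow_split (x : Fin ν → ℝ) (f : Fin ν → ℕ) (i : Fin ν) :
    (∏ j, x j ^ f j) = x i ^ f i * ∏ j ∈ Finset.univ.erase i, x j ^ f j :=
  (Finset.mul_prod_erase Finset.univ _ (Finset.mem_univ i)).symm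

lemma erase_congr_update {M : Type*} [CommMonoid M] (g : Fin ν → ℕ → M) (α : Fin ν → ℕ)
    (i : Fin ν) (v : ℕ) :
    (∏ j ∈ Finset.univ.erase i, g j (Function.update α i v j)) =
      ∏ j ∈ Finset.univ.erase i, g j (α j) :=
  Finset.prod_congr rfl fun j hj => by
    rw [Function.update_of_ne (Finset.mem_erase.mp hj).1]

lemma erase_congr_update_add (g : Fin ν → ℕ → ℕ) (α : Fin ν → ℕ) (i : Fin ν) (v : ℕ) :
    (∑ j ∈ Finset.univ.erase i, g j (Function.update α i v j)) =
      ∑ j ∈ Finset.univ.erase i, g j (α j) :=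
  Finset.sum_congr rfl fun j hj => by
    rw [Function.update_of_ne (Finset.mem_erase.mp hj).1]

set_option maxHeartbeats 2000000 in
lemma Cc_rec (α β' : Fin ν → ℕ) (i : Fin ν)
    (h : ∀ j, 2 * β' j ≤ Function.update α i (α i + 1) j) :
    Cc (Function.update α i (α i + 1)) β' =
      (if ∀ j, 2 * β' j ≤ α j then
          (-2 : ℝ) * (((∑ j, (α j - β' j)) : ℕ) + 1) * Cc α β' else 0) +
      (if 1 ≤ β' i then
          ((α i + 2 - 2 * β' i : ℕ) : ℝ) * Cc α (Function.update β' i (β' i - 1)) else 0) := by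
  classical
  have hi : 2 * β' i ≤ α i + 1 := by simpa using h i
  have hkq : β' i ≤ α i := by omega
  have hoff : ∀ j, j ≠ i → 2 * β' j ≤ α j := by
    intro j hj; have := h j; rwa [Function.update_of_ne hj] at this
  have hA1 : (∏ j, ((Function.update α i (α i + 1) j).factorial : ℝ))
      = ((α i + 1).factorial : ℝ) * ∏ j ∈ Finset.univ.erase i, ((α j).factorial : ℝ) := by
    rw [prod_fact_split _ i, Function.update_self]
    congr 1
    exact erase_congr_update (fun j n => ((n.factorial : ℝ))) α i _
  have hA2 : (∑ j, (Function.update α i (α i + 1) j - β' j))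
      = ((α i - β' i) + ∑ j ∈ Finset.univ.erase i, (α j - β' j)) + 1 := by
    rw [sum_split _ i, Function.update_self,
      erase_congr_update_add (fun j n => n - β' j) α i _]
    omega
  have hA3 : (∏ j, ((Function.update α i (α i + 1) j - 2 * β' j).factorial : ℝ))
      = ((α i + 1 - 2 * β' i).factorial : ℝ) *
        ∏ j ∈ Finset.univ.erase i, ((α j - 2 * β' j).factorial : ℝ) := by
    rw [prod_fact_split _ i, Function.update_self]
    congr 1
    exact erase_congr_update (fun j n => (((n - 2 * β' j).factorial : ℝ))) α i _
  have hB1 : (∏ j, ((α j).factorial : ℝ))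
      = ((α i).factorial : ℝ) * ∏ j ∈ Finset.univ.erase i, ((α j).factorial : ℝ) :=
    prod_fact_split _ i
  have hB2 : (∑ j, (α j - β' j))
      = (α i - β' i) + ∑ j ∈ Finset.univ.erase i, (α j - β' j) := sum_split _ i
  have hB3 : (∏ j, ((α j - 2 * β' j).factorial : ℝ))
      = ((α i - 2 * β' i).factorial : ℝ) *
        ∏ j ∈ Finset.univ.erase i, ((α j - 2 * β' j).factorial : ℝ) :=
    prod_fact_split (fun j => α j - 2 * β' j) i
  have hb : (∑ j, β' j) = β' i + ∑ j ∈ Finset.univ.erase i, β' j := sum_split _ i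
  have hBf : (∏ j, ((β' j).factorial : ℝ))
      = ((β' i).factorial : ℝ) * ∏ j ∈ Finset.univ.erase i, ((β' j).factorial : ℝ) :=
    prod_fact_split _ i
  have hC1 : (∑ j, (α j - Function.update β' i (β' i - 1) j))
      = (α i - (β' i - 1)) + ∑ j ∈ Finset.univ.erase i, (α j - β' j) := by
    rw [sum_split _ i, Function.update_self,
      erase_congr_update_add (fun j n => α j - n) β' i _]
  have hC2 : (∑ j, Function.update β' i (β' i - 1) j)
      = (β' i - 1) + ∑ j ∈ Finset.univ.erase i, β' j := by
    rw [sum_split _ i, Function.update_self,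
      erase_congr_update_add (fun j n => n) β' i _]
  have hC3 : (∏ j, ((Function.update β' i (β' i - 1) j).factorial : ℝ))
      = ((β' i - 1).factorial : ℝ) * ∏ j ∈ Finset.univ.erase i, ((β' j).factorial : ℝ) := by
    rw [prod_fact_split _ i, Function.update_self]
    congr 1
    exact erase_congr_update (fun j n => ((n.factorial : ℝ))) β' i _
  have hC4 : (∏ j, ((α j - 2 * Function.update β' i (β' i - 1) j).factorial : ℝ))
      = ((α i - 2 * (β' i - 1)).factorial : ℝ) *
        ∏ j ∈ Finset.univ.erase i, ((α j - 2 * β' j).factorial : ℝ) := by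
    rw [prod_fact_split _ i, Function.update_self]
    congr 1
    exact erase_congr_update (fun j n => (((α j - 2 * n).factorial : ℝ))) β' i _
  have hNfac : ∀ m : ℕ, ((m.factorial : ℝ)) ≠ 0 :=
    fun m => Nat.cast_ne_zero.mpr (Nat.factorial_ne_zero m)
  have hN0 : (0:ℝ) < ∏ j ∈ Finset.univ.erase i, ((α j).factorial : ℝ) :=
    Finset.prod_pos fun j _ => by positivity
  have hB0 : (0:ℝ) < ∏ j ∈ Finset.univ.erase i, ((β' j).factorial : ℝ) :=
    Finset.prod_pos fun j _ => by positivity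
  have hD0 : (0:ℝ) < ∏ j ∈ Finset.univ.erase i, ((α j - 2 * β' j).factorial : ℝ) :=
    Finset.prod_pos fun j _ => by positivity
  have hcond : (∀ j, 2 * β' j ≤ α j) ↔ 2 * β' i ≤ α i :=
    ⟨fun hh => hh i, fun hh j => by
      by_cases hji : j = i
      · subst hji; exact hh
      · exact hoff j hji⟩
  simp only [Cc, hA1, hA2, hA3, hB1, hB2, hB3, hb, hBf, hC1, hC2, hC3, hC4]
  by_cases hk2 : 2 * β' i ≤ α i
  · rw [if_pos (hcond.mpr hk2)]
    have e1 : α i + 1 - 2 * β' i = (α i - 2 * β' i) + 1 := by omega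
    by_cases hk1 : 1 ≤ β' i
    · rw [if_pos hk1]
      have e2 : α i - (β' i - 1) = (α i - β' i) + 1 := by omega
      have e3 : α i - 2 * (β' i - 1) = (α i - 2 * β' i) + 2 := by omega
      have e4 : α i + 2 - 2 * β' i = (α i - 2 * β' i) + 2 := by omega
      rw [e1, e2, e3, e4]
      rw [show (α i - β' i) + 1 + ∑ j ∈ Finset.univ.erase i, (α j - β' j)
          = ((α i - β' i) + ∑ j ∈ Finset.univ.erase i, (α j - β' j)) + 1 by omega]
      rw [show (α i - 2 * β' i) + 2 = ((α i - 2 * β' i) + 1) + 1 by omega]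
      set n0 := ∑ j ∈ Finset.univ.erase i, (α j - β' j) with hsn0
      set b0 := ∑ j ∈ Finset.univ.erase i, β' j with hsb0
      set N0 := ∏ j ∈ Finset.univ.erase i, ((α j).factorial : ℝ) with hsN0
      set B0 := ∏ j ∈ Finset.univ.erase i, ((β' j).factorial : ℝ) with hsB0
      set D0 := ∏ j ∈ Finset.univ.erase i, ((α j - 2 * β' j).factorial : ℝ) with hsD0
      set dd := α i - β' i with hsd
      set cc := α i - 2 * β' i with hsc
      set k1 := β' i - 1 with hsk
      simp only [Nat.factorial_succ]
      rw [show β' i = k1 + 1 by omega]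
      simp only [Nat.factorial_succ]
      rw [show k1 + 1 + b0 = (k1 + b0) + 1 by omega]
      simp only [pow_succ]
      rw [show α i + 1 = cc + 2 * k1 + 3 by omega]
      push_cast
      field_simp
      ring
    · rw [if_neg hk1]
      have hk0 : β' i = 0 := by omega
      rw [hk0]
      simp only [Nat.mul_zero, Nat.sub_zero, Nat.add_zero, Nat.zero_add]
      set n0 := ∑ j ∈ Finset.univ.erase i, (α j - β' j) with hsn0
      set b0 := ∑ j ∈ Finset.univ.erase i, β' j with hsb0
      set N0 := ∏ j ∈ Finset.univ.erase i, ((α j).factorial : ℝ) with hsN0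
      set B0 := ∏ j ∈ Finset.univ.erase i, ((β' j).factorial : ℝ) with hsB0
      set D0 := ∏ j ∈ Finset.univ.erase i, ((α j - 2 * β' j).factorial : ℝ) with hsD0
      set dd := α i - β' i with hsd
      set cc := α i - 2 * β' i with hsc
      set k1 := β' i - 1 with hsk
      simp only [Nat.factorial_succ, pow_succ]
      push_cast
      field_simp
      ring
  · rw [if_neg (fun hh => hk2 (hcond.mp hh)), if_pos (show 1 ≤ β' i by omega)]
    rw [show α i + 1 - 2 * β' i = 0 by omega, show α i - 2 * (β' i - 1) = 1 by omega,
      show α i + 2 - 2 * β' i = 1 by omega, show α i - (β' i - 1) = (α i - β' i) + 1 by omega]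
    rw [show (α i - β' i) + 1 + ∑ j ∈ Finset.univ.erase i, (α j - β' j)
        = ((α i - β' i) + ∑ j ∈ Finset.univ.erase i, (α j - β' j)) + 1 by omega]
    set n0 := ∑ j ∈ Finset.univ.erase i, (α j - β' j) with hsn0
    set b0 := ∑ j ∈ Finset.univ.erase i, β' j with hsb0
    set N0 := ∏ j ∈ Finset.univ.erase i, ((α j).factorial : ℝ) with hsN0
    set B0 := ∏ j ∈ Finset.univ.erase i, ((β' j).factorial : ℝ) with hsB0
    set D0 := ∏ j ∈ Finset.univ.erase i, ((α j - 2 * β' j).factorial : ℝ) with hsD0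
    set dd := α i - β' i with hsd
    set cc := α i - 2 * β' i with hsc
    set k1 := β' i - 1 with hsk
    simp only [Nat.factorial_succ, Nat.factorial_zero, Nat.factorial_one]
    rw [show α i + 1 = 2 * (k1 + 1) by omega, show β' i = k1 + 1 by omega]
    simp only [Nat.factorial_succ]
    rw [show k1 + 1 + b0 = (k1 + b0) + 1 by omega]
    simp only [pow_succ]
    push_cast
    field_simp
    ring

set_option maxHeartbeats 2000000 in
lemma step (z : Fin ν → ℂ) (hz : (fun j => (z j).im) ≠ 0) (α : Fin ν → ℕ) (i : Fin ν) :
    pderiv' i (FF z α) = FF z (Function.update α i (α i + 1)) := by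
  classical
  funext t
  rw [pderiv_FF z hz α i t]
  -- notation
  have hupj : ∀ j, j ≠ i → Function.update α i (α i + 1) j = α j :=
    fun j hj => Function.update_of_ne hj _ _
  -- sum of exponents relation for β with β i ≤ α i
  have key2 : ∀ β : Fin ν → ℕ, β i ≤ α i →
      (∑ j, (Function.update α i (α i + 1) j - β j)) = (∑ j, (α j - β j)) + 1 := by
    intro β hβ
    rw [sum_split (fun j => Function.update α i (α i + 1) j - β j) i,
      sum_split (fun j => α j - β j) i,
      erase_congr_update_add (fun j n => n - β j) α i _, Function.update_self]
    omega
  have keyZ : ∀ β : Fin ν → ℕ,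
      (∑ j, ((Function.update α i (α i + 1) j : ℤ) - (β j : ℤ)))
        = (∑ j, ((α j : ℤ) - (β j : ℤ))) + 1 := by
    intro β
    rw [← Finset.add_sum_erase _ _ (Finset.mem_univ i),
      ← Finset.add_sum_erase _ (fun j => ((α j : ℤ) - (β j : ℤ))) (Finset.mem_univ i),
      Function.update_self]
    rw [show (∑ j ∈ Finset.univ.erase i, ((Function.update α i (α i + 1) j : ℤ) - (β j : ℤ)))
        = ∑ j ∈ Finset.univ.erase i, ((α j : ℤ) - (β j : ℤ)) from
      Finset.sum_congr rfl fun j hj => by rw [hupj j (Finset.mem_erase.mp hj).1]]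
    push_cast
    ring
  have keymI : ∀ β : Fin ν → ℕ, β i ≤ α i →
      mI (Function.update α i (α i + 1)) β = mI α β - 1 := by
    intro β hβ
    simp only [mI]
    rw [keyZ β]
    ring
  have keyS : ∀ β : Fin ν → ℕ, (∀ j, β j ≤ α j) →
      (∑ j, ((α j : ℤ) - (β j : ℤ))) = ((∑ j, (α j - β j) : ℕ) : ℤ) := by
    intro β hβ
    rw [Nat.cast_sum]
    exact Finset.sum_congr rfl fun j _ => (Nat.cast_sub (hβ j)).symm
  have key1 : ∀ β : Fin ν → ℕ, 2 * β i ≤ α i →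
      (∏ j, (t j - (z j).re) ^ (Function.update α i (α i + 1) j - 2 * β j))
        = (∏ j, (t j - (z j).re) ^ (α j - 2 * β j)) * (t i - (z i).re) := by
    intro β hβ
    rw [prod_pow_split (fun j => t j - (z j).re)
        (fun j => Function.update α i (α i + 1) j - 2 * β j) i,
      prod_pow_split (fun j => t j - (z j).re) (fun j => α j - 2 * β j) i,
      erase_congr_update (fun j n => (t j - (z j).re) ^ (n - 2 * β j)) α i _,
      Function.update_self, show α i + 1 - 2 * β i = (α i - 2 * β i) + 1 by omega, pow_succ]
    ring
  -- RHS expansion via Cc_rec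
  have hR : FF z (Function.update α i (α i + 1)) t
      = (∑ β ∈ Sset (Function.update α i (α i + 1)),
          (if ∀ j, 2 * β j ≤ α j then
              (-2 : ℝ) * (((∑ j, (α j - β j)) : ℕ) + 1) * Cc α β *
                (∏ j, (t j - (z j).re) ^ (Function.update α i (α i + 1) j - 2 * β j)) *
                absSq z t ^ mI (Function.update α i (α i + 1)) β
            else 0))
        + ∑ β ∈ Sset (Function.update α i (α i + 1)),
          (if 1 ≤ β i then
              ((α i + 2 - 2 * β i : ℕ) : ℝ) * Cc α (Function.update β i (β i - 1)) *
                (∏ j, (t j - (z j).re) ^ (Function.update α i (α i + 1) j - 2 * β j)) *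
                absSq z t ^ mI (Function.update α i (α i + 1)) β
            else 0) := by
    rw [FF, ← Finset.sum_add_distrib]
    refine Finset.sum_congr rfl fun β hβ => ?_
    rw [Cc_rec α β i (mem_Sset.mp hβ)]
    split_ifs <;> ring
  rw [hR, ← Finset.sum_filter, ← Finset.sum_filter]
  have hSS : (Sset (Function.update α i (α i + 1))).filter (fun β => ∀ j, 2 * β j ≤ α j)
      = Sset α := by
    ext β
    simp only [Finset.mem_filter, mem_Sset]
    constructor
    · exact fun h => h.2
    · intro h
      refine ⟨fun j => ?_, h⟩
      rcases eq_or_ne j i with rfl | hj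
      · rw [Function.update_self]; exact (h j).trans (Nat.le_succ _)
      · rw [hupj j hj]; exact h j
  rw [hSS]
  -- split LHS
  rw [show (∑ β ∈ Sset α, Cc α β *
      ((∏ j, (t j - (z j).re) ^ (α j - 2 * β j)) *
          (((mI α β : ℤ) : ℝ) * absSq z t ^ (mI α β - 1) * (2 * (t i - (z i).re)))
        + absSq z t ^ mI α β *
          ((∏ k ∈ Finset.univ.erase i, (t k - (z k).re) ^ (α k - 2 * β k)) *
            (((α i - 2 * β i : ℕ) : ℝ) * (t i - (z i).re) ^ ((α i - 2 * β i) - 1)))))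
      = (∑ β ∈ Sset α, Cc α β *
          ((∏ j, (t j - (z j).re) ^ (α j - 2 * β j)) *
            (((mI α β : ℤ) : ℝ) * absSq z t ^ (mI α β - 1) * (2 * (t i - (z i).re)))))
        + ∑ β ∈ Sset α, Cc α β *
            (absSq z t ^ mI α β *
              ((∏ k ∈ Finset.univ.erase i, (t k - (z k).re) ^ (α k - 2 * β k)) *
                (((α i - 2 * β i : ℕ) : ℝ) * (t i - (z i).re) ^ ((α i - 2 * β i) - 1))))
      by rw [← Finset.sum_add_distrib]; exact Finset.sum_congr rfl fun β _ => by ring]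
  congr 1
  · -- A part, pointwise
    refine Finset.sum_congr rfl fun β hβ => ?_
    have hβ' := mem_Sset.mp hβ
    have hcast : ((mI α β : ℤ) : ℝ) = -(((∑ j, (α j - β j)) : ℕ) : ℝ) - 1 := by
      simp only [mI]
      rw [keyS β (fun j => by have := hβ' j; omega)]
      push_cast
      ring
    rw [hcast, key1 β (hβ' i), keymI β (by have := hβ' i; omega)]
    ring
  · -- B part, reindex
    rw [show (∑ β ∈ Sset α, Cc α β *
        (absSq z t ^ mI α β *
          ((∏ k ∈ Finset.univ.erase i, (t k - (z k).re) ^ (α k - 2 * β k)) *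
            (((α i - 2 * β i : ℕ) : ℝ) * (t i - (z i).re) ^ ((α i - 2 * β i) - 1)))))
        = ∑ β ∈ (Sset α).filter (fun β => 2 * β i < α i), Cc α β *
            (absSq z t ^ mI α β *
              ((∏ k ∈ Finset.univ.erase i, (t k - (z k).re) ^ (α k - 2 * β k)) *
                (((α i - 2 * β i : ℕ) : ℝ) * (t i - (z i).re) ^ ((α i - 2 * β i) - 1))))
        from (Finset.sum_subset (Finset.filter_subset _ _) fun β hβ hnβ => by
          have h1 := mem_Sset.mp hβ i
          have h2 : α i - 2 * β i = 0 := by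
            simp only [Finset.mem_filter, hβ, true_and] at hnβ
            omega
          simp [h2]).symm]
    refine Finset.sum_nbij' (fun β => Function.update β i (β i + 1))
      (fun β => Function.update β i (β i - 1)) ?_ ?_ ?_ ?_ ?_
    · intro β hβ
      simp only [Finset.mem_filter, mem_Sset] at hβ ⊢
      constructor
      · intro j
        rcases eq_or_ne j i with rfl | hj
        · rw [Function.update_self, Function.update_self]
          omega
        · rw [Function.update_of_ne hj, hupj j hj]
          exact hβ.1 j
      · rw [Function.update_self]; omega
    · intro β hβ
      simp only [Finset.mem_filter, mem_Sset] at hβ ⊢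
      have hβi := hβ.1 i
      rw [Function.update_self] at hβi
      constructor
      · intro j
        rcases eq_or_ne j i with rfl | hj
        · rw [Function.update_self]
          omega
        · rw [Function.update_of_ne hj]
          have := hβ.1 j
          rwa [hupj j hj] at this
      · rw [Function.update_self]
        omega
    · intro β hβ
      funext j
      rcases eq_or_ne j i with rfl | hj
      · simp
      · simp [Function.update_of_ne hj]
    · intro β hβ
      simp only [Finset.mem_filter, mem_Sset] at hβ
      funext j
      rcases eq_or_ne j i with rfl | hj
      · simp only [Function.update_self]
        omega
      · simp [Function.update_of_ne hj]
    · intro β hβ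
      simp only [Finset.mem_filter, mem_Sset] at hβ
      have hβi : 2 * β i < α i := hβ.2
      have hpsi : Function.update (Function.update β i (β i + 1)) i
          (Function.update β i (β i + 1) i - 1) = β := by
        funext j
        rcases eq_or_ne j i with rfl | hj
        · simp
        · simp [Function.update_of_ne hj]
      rw [hpsi, Function.update_self,
        show α i + 2 - 2 * (β i + 1) = α i - 2 * β i by omega]
      have hprod : (∏ j, (t j - (z j).re) ^
            (Function.update α i (α i + 1) j - 2 * Function.update β i (β i + 1) j))
          = (∏ k ∈ Finset.univ.erase i, (t k - (z k).re) ^ (α k - 2 * β k)) *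
              (t i - (z i).re) ^ ((α i - 2 * β i) - 1) := by
        rw [prod_pow_split (fun j => t j - (z j).re)
            (fun j => Function.update α i (α i + 1) j - 2 * Function.update β i (β i + 1) j) i,
          Function.update_self, Function.update_self,
          show α i + 1 - 2 * (β i + 1) = (α i - 2 * β i) - 1 by omega]
        rw [show (∏ j ∈ Finset.univ.erase i, (t j - (z j).re) ^
            (Function.update α i (α i + 1) j - 2 * Function.update β i (β i + 1) j))
          = ∏ j ∈ Finset.univ.erase i, (t j - (z j).re) ^ (α j - 2 * β j) from
          Finset.prod_congr rfl fun j hj => by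
            rw [hupj j (Finset.mem_erase.mp hj).1,
              Function.update_of_ne (Finset.mem_erase.mp hj).1]]
        ring
      have hmi : mI (Function.update α i (α i + 1)) (Function.update β i (β i + 1)) = mI α β := by
        simp only [mI]
        have e : (∑ j, ((Function.update α i (α i + 1) j : ℤ) -
              (Function.update β i (β i + 1) j : ℤ)))
            = ∑ j, ((α j : ℤ) - (β j : ℤ)) := by
          rw [← Finset.add_sum_erase _ _ (Finset.mem_univ i),
            ← Finset.add_sum_erase _ (fun j => ((α j : ℤ) - (β j : ℤ))) (Finset.mem_univ i),
            Function.update_self, Function.update_self]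
          rw [show (∑ j ∈ Finset.univ.erase i, ((Function.update α i (α i + 1) j : ℤ) -
              (Function.update β i (β i + 1) j : ℤ)))
              = ∑ j ∈ Finset.univ.erase i, ((α j : ℤ) - (β j : ℤ)) from
            Finset.sum_congr rfl fun j hj => by
              rw [hupj j (Finset.mem_erase.mp hj).1,
                Function.update_of_ne (Finset.mem_erase.mp hj).1]]
          push_cast
          ring
        rw [e]
      rw [hprod, hmi]
      ring

lemma FF_zero (z : Fin ν → ℂ) : FF z (fun _ => 0) = fun s => (absSq z s)⁻¹ := by
  funext s
  rw [FF]
  have hS : Sset (fun _ : Fin ν => 0) = {fun _ => 0} := by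
    ext β
    simp only [mem_Sset, Finset.mem_singleton]
    constructor
    · intro h; funext j; have := h j; omega
    · intro h; subst h; intro j; simp
  rw [hS, Finset.sum_singleton]
  simp [Cc, mI, zpow_neg, zpow_one]

lemma iter_FF (z : Fin ν → ℂ) (hz : (fun j => (z j).im) ≠ 0) (n : ℕ) (i : Fin ν)
    (γ : Fin ν → ℕ) :
    (pderiv' i)^[n] (FF z γ) = FF z (Function.update γ i (γ i + n)) := by
  induction n with
  | zero => simp
  | succ n ih =>
    rw [Function.iterate_succ_apply', ih, step z hz]
    have hupd : Function.update (Function.update γ i (γ i + n)) i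
        (Function.update γ i (γ i + n) i + 1) = Function.update γ i (γ i + (n + 1)) := by
      funext j
      rcases eq_or_ne j i with rfl | hj
      · simp; omega
      · simp [Function.update_of_ne hj]
    rw [hupd]

lemma foldr_FF (z : Fin ν → ℂ) (hz : (fun j => (z j).im) ≠ 0) (α : Fin ν → ℕ) :
    ∀ (l : List (Fin ν)) (γ : Fin ν → ℕ),
      l.foldr (fun i g => (pderiv' i)^[α i] g) (FF z γ)
        = FF z (fun j => γ j + l.count j * α j) := by
  intro l
  induction l with
  | nil => intro γ; simp
  | cons i l ih =>
    intro γ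
    rw [List.foldr_cons, ih γ, iter_FF z hz]
    have hupd : Function.update (fun j => γ j + l.count j * α j) i
        ((fun j => γ j + l.count j * α j) i + α i)
        = fun j => γ j + (i :: l).count j * α j := by
      funext j
      rcases eq_or_ne j i with rfl | hj
      · simp [List.count_cons]
        ring
      · simp [List.count_cons, Function.update_of_ne hj, hj, Ne.symm hj]
    rw [hupd]

end Stmt1Aux

open Stmt1Aux in
/-- For `g(t) = |t - z|^{-2}` with `Im z ≠ 0`, and every multi-index `α`,
`∂^α g(t) = Σ_{2β ≤ α} α! T_α^β(t,z) |t - z|^{-2}`. -/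
theorem stmt_1 {ν : ℕ} (hν : 1 ≤ ν) (z : Fin ν → ℂ)
    (hz : (fun j => (z j).im) ≠ 0) (α : Fin ν → ℕ) (t : Fin ν → ℝ) :
    mderiv α (fun s => (absSq z s)⁻¹) t =
      ∑ β ∈ (Fintype.piFinset fun j => Finset.range (α j + 1)).filter
          (fun β => ∀ j, 2 * β j ≤ α j),
        ((∏ j, (Nat.factorial (α j) : ℝ)) * Tcoef z α β t * (absSq z t)⁻¹) := by
  have hQne : absSq z t ≠ 0 := (absSq_pos hz t).ne'
  have hmain : mderiv α (fun s => (absSq z s)⁻¹) = FF z α := by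
    rw [mderiv, ← FF_zero z, foldr_FF z hz α (List.finRange ν) (fun _ => 0)]
    have hcnt : (fun j => 0 + (List.finRange ν).count j * α j) = α := by
      funext j
      rw [List.count_eq_one_of_mem (List.nodup_finRange ν) (List.mem_finRange j)]
      omega
    rw [hcnt]
  rw [hmain, FF]
  refine Finset.sum_congr rfl fun β hβ => ?_
  simp only [Tcoef, Cc, mI]
  rw [zpow_sub_one₀ hQne]
  ring
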